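/- Let a ≠ 1 and α := b x_{-1} x_0 with α ≠ a^n(a-1)/(1-a^n) for all positive integers n. Then every solution of x_{n+1} = x_{n-1}/(a + b x_n x_{n-1}) satisfies x_{n+1} = h(n) x_{n-1} for all n ≥ 0, where h(n) = (a^n(1-a) + α(1-a^n))/(a^{n+1}(1-a) + α(1-a^{n+1})). -/

import Mathlib

theorem stmt_6 (a b : ℝ) (x : ℤ → ℝ) (α : ℝ)
    (ha : a ≠ 1)
    (halpha : α = b * x (-1) * x 0)
    (hadm : ∀ n : ℕ, 1 ≤ n → α ≠ a ^ n * (a - 1) / (1 - a ^ n))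
    (hrec : ∀ n : ℕ, x ((n : ℤ) + 1) = x ((n : ℤ) - 1) / (a + b * x (n : ℤ) * x ((n : ℤ) - 1))) :
    ∀ n : ℕ, x ((n : ℤ) + 1) =
      ((a ^ n * (1 - a) + α * (1 - a ^ n)) / (a ^ (n + 1) * (1 - a) + α * (1 - a ^ (n + 1))))
        * x ((n : ℤ) - 1) := by
  have ha' : (1 : ℝ) - a ≠ 0 := sub_ne_zero.mpr (Ne.symm ha)
  have hD : ∀ n : ℕ, a ^ n * (1 - a) + α * (1 - a ^ n) ≠ 0 := by
    intro n
    rcases Nat.eq_zero_or_pos n with h0 | h1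
    · subst h0; simpa using ha'
    · by_cases hpow : (a : ℝ) ^ n = 1
      · rw [hpow]; simpa using ha'
      · intro hzero
        apply hadm n h1
        have hb : 1 - a ^ n ≠ 0 := sub_ne_zero.mpr (Ne.symm hpow)
        field_simp
        linear_combination hzero
  have key : ∀ n : ℕ, b * x n * x ((n : ℤ) - 1) * (a ^ n * (1 - a) + α * (1 - a ^ n))
      = α * (1 - a) := by
    intro n
    induction n with
    | zero =>
      have : ((0 : ℤ) - 1) = -1 := by norm_num
      simp only [Nat.cast_zero, this, pow_zero]
      rw [halpha]; ring
    | succ n ih =>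
      have hDn1 := hD (n + 1)
      have hsum : (a + b * x n * x ((n : ℤ) - 1)) * (a ^ n * (1 - a) + α * (1 - a ^ n))
          = a ^ (n + 1) * (1 - a) + α * (1 - a ^ (n + 1)) := by
        linear_combination ih
      have hne : a + b * x n * x ((n : ℤ) - 1) ≠ 0 := by
        intro h0
        apply hDn1
        rw [← hsum, h0, zero_mul]
      have hx : x ((n : ℤ) + 1) = x ((n : ℤ) - 1) / (a + b * x n * x ((n : ℤ) - 1)) := hrec n
      have hc2 : (n : ℤ) + 1 - 1 = (n : ℤ) := by ring
      push_cast
      rw [hc2, hx]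
      field_simp
      rw [div_eq_iff (by convert hne using 1; ring)]
      linear_combination (a + b * x n * x ((n : ℤ) - 1)) * ih
        - b * x n * x ((n : ℤ) - 1) * hsum
  intro n
  have ih := key n
  have hDn := hD n
  have hDn1 := hD (n + 1)
  have hsum : (a + b * x n * x ((n : ℤ) - 1)) * (a ^ n * (1 - a) + α * (1 - a ^ n))
      = a ^ (n + 1) * (1 - a) + α * (1 - a ^ (n + 1)) := by
    linear_combination ih
  have hne : a + b * x n * x ((n : ℤ) - 1) ≠ 0 := by
    intro h0
    apply hDn1
    rw [← hsum, h0, zero_mul]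
  rw [hrec n]
  field_simp
  rw [div_eq_div_iff (by convert hne using 1; ring) (by convert hDn1 using 1; ring)]
  linear_combination (-(x ((n : ℤ) - 1))) * hsum
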